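/- Assume â < 0 and 0 < Q̂ < â², and let η, η_f ∈ ℝ. Let T̂ = ln(c_2/c_1)/(2√Δ̂) (the unique positive zero of Φ_{22}(·, 0)) and let x̂_0 ∈ ℝ be the unique solution of Φ_{21}(T̂, 0) x̂_0 + ∫_0^{T̂} Φ_{22}(T̂, τ) Q η dτ = −Λ_{1∞} η_f. Then for every choice of initial value s_0 ∈ ℝ, the solution (X̄, s) on [0, T̂] of the linear system dX̄/dt = (A − Λ_{1∞} + G) X̄ − s, ṡ = −(A − Λ_{1∞}) s − Λ_{1∞} G X̄ + Q(Γ X̄ + η), with X̄(0) = x̂_0 and s(0) = s_0, satisfies the terminal condition s(T̂) = −Λ_{1∞} η_f. Consequently the two-point boundary value problem dX̄/dt = (A − Λ_{1∞} + G) X̄ − s, ṡ = −(A − Λ_{1∞}) s − Λ_{1∞} G X̄ + Q(Γ X̄ + η), X̄(0) = x̂_0, s(T̂) = −Λ_{1∞} η_f, has infinitely many solutions. -/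

import Mathlib

/-- `Λ_{1∞} = A + √(A² + Q)`. -/
noncomputable def lam1Inf (A Q : ℝ) : ℝ := A + Real.sqrt (A ^ 2 + Q)

/-- `â = √(A² + Q) − G/2`. -/
noncomputable def aHat (A Q G : ℝ) : ℝ := Real.sqrt (A ^ 2 + Q) - G / 2

/-- `Q̂ = QΓ − (A + √(A² + Q)) G`. -/
noncomputable def qHat (A Q G Γ : ℝ) : ℝ := Q * Γ - (A + Real.sqrt (A ^ 2 + Q)) * G

/-- `Δ̂ = â² − Q̂`. -/
noncomputable def deltaHat (A Q G Γ : ℝ) : ℝ := (aHat A Q G) ^ 2 - qHat A Q G Γ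

/-- `c₁ = −â − √Δ̂`. -/
noncomputable def cOne (A Q G Γ : ℝ) : ℝ :=
  -aHat A Q G - Real.sqrt (deltaHat A Q G Γ)

/-- `c₂ = −â + √Δ̂`. -/
noncomputable def cTwo (A Q G Γ : ℝ) : ℝ :=
  -aHat A Q G + Real.sqrt (deltaHat A Q G Γ)

/-- `λ₁ = G/2 + √Δ̂`. -/
noncomputable def lamOne (A Q G Γ : ℝ) : ℝ := G / 2 + Real.sqrt (deltaHat A Q G Γ)

/-- `λ₂ = G/2 − √Δ̂`. -/
noncomputable def lamTwo (A Q G Γ : ℝ) : ℝ := G / 2 - Real.sqrt (deltaHat A Q G Γ)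

/-- `Φ₂₁(t,τ) = c₁c₂ (e^{λ₁(t−τ)} − e^{λ₂(t−τ)}) / (2√Δ̂)`. -/
noncomputable def phi21 (A Q G Γ t τ : ℝ) : ℝ :=
  cOne A Q G Γ * cTwo A Q G Γ *
    (Real.exp (lamOne A Q G Γ * (t - τ)) - Real.exp (lamTwo A Q G Γ * (t - τ)))
    / (2 * Real.sqrt (deltaHat A Q G Γ))

/-- `Φ₂₂(t,τ) = (c₂ e^{λ₂(t−τ)} − c₁ e^{λ₁(t−τ)}) / (2√Δ̂)`. -/
noncomputable def phi22 (A Q G Γ t τ : ℝ) : ℝ :=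
  (cTwo A Q G Γ * Real.exp (lamTwo A Q G Γ * (t - τ))
      - cOne A Q G Γ * Real.exp (lamOne A Q G Γ * (t - τ)))
    / (2 * Real.sqrt (deltaHat A Q G Γ))

/-- `T̂ = ln(c₂/c₁) / (2√Δ̂)`. -/
noncomputable def tHat (A Q G Γ : ℝ) : ℝ :=
  Real.log (cTwo A Q G Γ / cOne A Q G Γ) / (2 * Real.sqrt (deltaHat A Q G Γ))

/-- `(X̄, s)` satisfies the linear ODE system
`dX̄/dt = (A − Λ_{1∞} + G) X̄ − s`,
`ṡ = −(A − Λ_{1∞}) s − Λ_{1∞} G X̄ + Q(Γ X̄ + η)` on `[0, Th]`. -/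
def IsLinSysOn (A Q G Γ η Th : ℝ) (X s : ℝ → ℝ) : Prop :=
  (∀ t ∈ Set.Icc (0:ℝ) Th,
    HasDerivWithinAt X ((A - lam1Inf A Q + G) * X t - s t) (Set.Icc (0:ℝ) Th) t) ∧
  (∀ t ∈ Set.Icc (0:ℝ) Th,
    HasDerivWithinAt s
      (-((A - lam1Inf A Q) * s t) - lam1Inf A Q * G * X t + Q * (Γ * X t + η))
      (Set.Icc (0:ℝ) Th) t)

set_option maxHeartbeats 1000000


/-- `E(l,t) = ∫_0^t e^{ls} ds` in closed form. -/
noncomputable def myE (l t : ℝ) : ℝ := if l = 0 then t else (Real.exp (l * t) - 1) / l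

lemma myE_hasDerivAt (l t : ℝ) : HasDerivAt (myE l) (Real.exp (l * t)) t := by
  rcases eq_or_ne l 0 with h | h
  · subst h
    rw [show myE 0 = fun t : ℝ => t from funext fun t => by simp [myE]]
    simpa using hasDerivAt_id' t
  · rw [show myE l = fun t : ℝ => (Real.exp (l * t) - 1) / l from funext fun t => by
      simp [myE, h]]
    have h1 : HasDerivAt (fun t : ℝ => Real.exp (l * t)) (Real.exp (l * t) * l) t := by
      simpa using ((hasDerivAt_id t).const_mul l).exp
    have := (h1.sub_const 1).div_const l
    convert this using 1
    · exact rfl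
    · exact rfl
    field_simp

lemma myE_rel (l t : ℝ) : Real.exp (l * t) = l * myE l t + 1 := by
  rcases eq_or_ne l 0 with h | h
  · subst h; simp [myE]
  · simp only [myE, if_neg h]
    field_simp
    ring

lemma myE_zero (l : ℝ) : myE l 0 = 0 := by
  rcases eq_or_ne l 0 with h | h
  · subst h; simp [myE]
  · simp [myE, if_neg h]

lemma exists_sol (a d G x0 s0 b2 : ℝ) (hd : d ≠ 0) :
    ∃ X s : ℝ → ℝ, X 0 = x0 ∧ s 0 = s0 ∧ ∀ t : ℝ,
      HasDerivAt X ((G / 2 - a) * X t - s t) t ∧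
      HasDerivAt s ((G / 2 + a) * s t + (a ^ 2 - d ^ 2) * X t + b2) t := by
  set l1 : ℝ := G / 2 + d with hl1
  set l2 : ℝ := G / 2 - d with hl2
  set k1 : ℝ := x0 / 2 - a * x0 / (2 * d) - s0 / (2 * d) with hk1
  set k2 : ℝ := x0 / 2 + a * x0 / (2 * d) + s0 / (2 * d) with hk2
  set k3 : ℝ := -b2 / (2 * d) with hk3
  set k4 : ℝ := b2 / (2 * d) with hk4
  set m1 : ℝ := (a ^ 2 - d ^ 2) * x0 / (2 * d) + s0 / 2 + a * s0 / (2 * d) with hm1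
  set m2 : ℝ := -((a ^ 2 - d ^ 2) * x0) / (2 * d) + s0 / 2 - a * s0 / (2 * d) with hm2
  set m3 : ℝ := b2 / 2 + a * b2 / (2 * d) with hm3
  set m4 : ℝ := b2 / 2 - a * b2 / (2 * d) with hm4
  refine ⟨fun t => k1 * Real.exp (l1 * t) + k2 * Real.exp (l2 * t) + k3 * myE l1 t + k4 * myE l2 t,
    fun t => m1 * Real.exp (l1 * t) + m2 * Real.exp (l2 * t) + m3 * myE l1 t + m4 * myE l2 t,
    ?_, ?_, fun t => ⟨?_, ?_⟩⟩
  · simp only [mul_zero, Real.exp_zero, myE_zero, mul_one]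
    rw [hk1, hk2]; field_simp [hd]; ring
  · simp only [mul_zero, Real.exp_zero, myE_zero, mul_one]
    rw [hm1, hm2]; field_simp [hd]; ring
  · have he1 : HasDerivAt (fun t : ℝ => Real.exp (l1 * t)) (l1 * Real.exp (l1 * t)) t := by
      simpa [mul_comm] using ((hasDerivAt_id t).const_mul l1).exp
    have he2 : HasDerivAt (fun t : ℝ => Real.exp (l2 * t)) (l2 * Real.exp (l2 * t)) t := by
      simpa [mul_comm] using ((hasDerivAt_id t).const_mul l2).exp
    have h := (((he1.const_mul k1).add (he2.const_mul k2)).add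
      ((myE_hasDerivAt l1 t).const_mul k3)).add ((myE_hasDerivAt l2 t).const_mul k4)
    convert h using 1
    · exact rfl
    · exact rfl
    · exact rfl
    beta_reduce
    rw [myE_rel l1 t, myE_rel l2 t]
    rw [hk1, hk2, hk3, hk4, hm1, hm2, hm3, hm4]
    field_simp [hd]
    ring
  · have he1 : HasDerivAt (fun t : ℝ => Real.exp (l1 * t)) (l1 * Real.exp (l1 * t)) t := by
      simpa [mul_comm] using ((hasDerivAt_id t).const_mul l1).exp
    have he2 : HasDerivAt (fun t : ℝ => Real.exp (l2 * t)) (l2 * Real.exp (l2 * t)) t := by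
      simpa [mul_comm] using ((hasDerivAt_id t).const_mul l2).exp
    have h := (((he1.const_mul m1).add (he2.const_mul m2)).add
      ((myE_hasDerivAt l1 t).const_mul m3)).add ((myE_hasDerivAt l2 t).const_mul m4)
    convert h using 1
    · exact rfl
    · exact rfl
    · exact rfl
    beta_reduce
    rw [myE_rel l1 t, myE_rel l2 t]
    rw [hk1, hk2, hk3, hk4, hm1, hm2, hm3, hm4]
    field_simp [hd]
    ring



lemma exp_hasDerivAt_aux (l T t : ℝ) :
    HasDerivAt (fun τ : ℝ => Real.exp (l * (T - τ))) (-(l * Real.exp (l * (T - t)))) t := by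
  have h := (((hasDerivAt_id t).const_sub T).const_mul l).exp
  simp only [id_eq] at h
  convert h using 1
  ring

lemma phi21_hasDerivAt (A Q G Γ T t : ℝ) (hΔ : 0 < deltaHat A Q G Γ) :
    HasDerivAt (fun τ => phi21 A Q G Γ T τ)
      (-((G / 2 - aHat A Q G) * phi21 A Q G Γ T t + qHat A Q G Γ * phi22 A Q G Γ T t)) t := by
  have hd : Real.sqrt (deltaHat A Q G Γ) ≠ 0 := (Real.sqrt_pos.2 hΔ).ne'
  have hd2 : (Real.sqrt (deltaHat A Q G Γ)) ^ 2 = (aHat A Q G) ^ 2 - qHat A Q G Γ :=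
    (Real.sq_sqrt hΔ.le).trans rfl
  have h := (((exp_hasDerivAt_aux (lamOne A Q G Γ) T t).sub
      (exp_hasDerivAt_aux (lamTwo A Q G Γ) T t)).const_mul
      (cOne A Q G Γ * cTwo A Q G Γ)).div_const (2 * Real.sqrt (deltaHat A Q G Γ))
  simp only [phi21]
  convert h using 1
  · exact rfl
  · exact rfl
  · exact rfl
  simp only [phi21, phi22, cOne, cTwo, lamOne, lamTwo]
  have hq : qHat A Q G Γ = (aHat A Q G) ^ 2 - (Real.sqrt (deltaHat A Q G Γ)) ^ 2 := by
    linarith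
  rw [hq]
  generalize hgen : Real.sqrt (deltaHat A Q G Γ) = sd at *
  field_simp
  ring

lemma phi22_hasDerivAt (A Q G Γ T t : ℝ) (hΔ : 0 < deltaHat A Q G Γ) :
    HasDerivAt (fun τ => phi22 A Q G Γ T τ)
      (phi21 A Q G Γ T t - (G / 2 + aHat A Q G) * phi22 A Q G Γ T t) t := by
  have hd : Real.sqrt (deltaHat A Q G Γ) ≠ 0 := (Real.sqrt_pos.2 hΔ).ne'
  have hd2 : (Real.sqrt (deltaHat A Q G Γ)) ^ 2 = (aHat A Q G) ^ 2 - qHat A Q G Γ :=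
    (Real.sq_sqrt hΔ.le).trans rfl
  have h := (((exp_hasDerivAt_aux (lamTwo A Q G Γ) T t).const_mul (cTwo A Q G Γ)).sub
      ((exp_hasDerivAt_aux (lamOne A Q G Γ) T t).const_mul (cOne A Q G Γ))).div_const
      (2 * Real.sqrt (deltaHat A Q G Γ))
  simp only [phi22]
  convert h using 1
  · exact rfl
  · exact rfl
  · exact rfl
  simp only [phi21, phi22, cOne, cTwo, lamOne, lamTwo]
  generalize hgen : Real.sqrt (deltaHat A Q G Γ) = sd at *
  field_simp
  ring

lemma phi22_continuous (A Q G Γ T : ℝ) : Continuous (fun τ => phi22 A Q G Γ T τ) := by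
  unfold phi22
  fun_prop


/-- Assume `â < 0`, `0 < Q̂ < â²`, let `T̂ = ln(c₂/c₁)/(2√Δ̂)` and
let `x̂₀` solve `Φ₂₁(T̂,0) x̂₀ + ∫₀^{T̂} Φ₂₂(T̂,τ) Q η dτ = −Λ_{1∞} η_f`.  Then every
solution of the linear system on `[0,T̂]` with `X̄(0) = x̂₀` (any initial value `s(0)`)
satisfies the terminal condition `s(T̂) = −Λ_{1∞} η_f`; consequently, for every
`s₀ ∈ ℝ` the TPBV problem `X̄(0) = x̂₀`, `s(T̂) = −Λ_{1∞} η_f` has a solution with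
`s(0) = s₀`, hence it has infinitely many solutions. -/
theorem tpbv_infinitely_many_solutions
    (A G Q Γ η ηf x0hat : ℝ) (hQ : 0 ≤ Q)
    (ha : aHat A Q G < 0)
    (hq1 : 0 < qHat A Q G Γ) (hq2 : qHat A Q G Γ < (aHat A Q G) ^ 2)
    (hx0 : phi21 A Q G Γ (tHat A Q G Γ) 0 * x0hat
        + (∫ τ in (0:ℝ)..(tHat A Q G Γ), phi22 A Q G Γ (tHat A Q G Γ) τ * (Q * η))
      = -(lam1Inf A Q) * ηf) :
    (∀ X s : ℝ → ℝ,
      IsLinSysOn A Q G Γ η (tHat A Q G Γ) X s → X 0 = x0hat →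
        s (tHat A Q G Γ) = -(lam1Inf A Q) * ηf) ∧
    (∀ s0 : ℝ, ∃ X s : ℝ → ℝ,
      IsLinSysOn A Q G Γ η (tHat A Q G Γ) X s ∧ X 0 = x0hat ∧ s 0 = s0 ∧
      s (tHat A Q G Γ) = -(lam1Inf A Q) * ηf) := by
  have hΔ : 0 < deltaHat A Q G Γ := by unfold deltaHat; linarith
  have hd : 0 < Real.sqrt (deltaHat A Q G Γ) := Real.sqrt_pos.2 hΔ
  have hd2 : (Real.sqrt (deltaHat A Q G Γ)) ^ 2 = (aHat A Q G) ^ 2 - qHat A Q G Γ :=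
    (Real.sq_sqrt hΔ.le).trans rfl
  have hdlt : Real.sqrt (deltaHat A Q G Γ) < -aHat A Q G := by nlinarith
  have hc1 : 0 < cOne A Q G Γ := by unfold cOne; linarith
  have hc2 : 0 < cTwo A Q G Γ := by unfold cTwo; linarith
  have hc12 : cOne A Q G Γ < cTwo A Q G Γ := by unfold cOne cTwo; linarith
  have hT0 : 0 < tHat A Q G Γ := by
    unfold tHat
    exact div_pos (Real.log_pos ((one_lt_div hc1).2 hc12)) (by positivity)
  -- φ22(T̂,0) = 0
  have hexp : Real.exp (lamOne A Q G Γ * (tHat A Q G Γ - 0))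
      = Real.exp (lamTwo A Q G Γ * (tHat A Q G Γ - 0)) * (cTwo A Q G Γ / cOne A Q G Γ) := by
    rw [← Real.exp_log (div_pos hc2 hc1), ← Real.exp_add]
    congr 1
    unfold lamOne lamTwo tHat
    field_simp
    ring
  have h220 : phi22 A Q G Γ (tHat A Q G Γ) 0 = 0 := by
    unfold phi22
    rw [hexp]
    field_simp
    ring
  have h21T : phi21 A Q G Γ (tHat A Q G Γ) (tHat A Q G Γ) = 0 := by
    unfold phi21; simp
  have h22T : phi22 A Q G Γ (tHat A Q G Γ) (tHat A Q G Γ) = 1 := by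
    unfold phi22 cOne cTwo
    simp only [sub_self, mul_zero, Real.exp_zero, mul_one]
    field_simp
    ring
  -- part 1
  have part1 : ∀ X s : ℝ → ℝ,
      IsLinSysOn A Q G Γ η (tHat A Q G Γ) X s → X 0 = x0hat →
        s (tHat A Q G Γ) = -(lam1Inf A Q) * ηf := by
    rintro X s ⟨hX, hs⟩ hX0
    set Th := tHat A Q G Γ with hTh
    have hF : ∀ t ∈ Set.Icc (0:ℝ) Th,
        HasDerivWithinAt (fun u => phi21 A Q G Γ Th u * X u + phi22 A Q G Γ Th u * s u)
          (phi22 A Q G Γ Th t * (Q * η)) (Set.Icc (0:ℝ) Th) t := by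
      intro t ht
      have h21 := (phi21_hasDerivAt A Q G Γ Th t hΔ).hasDerivWithinAt (s := Set.Icc (0:ℝ) Th)
      have h22 := (phi22_hasDerivAt A Q G Γ Th t hΔ).hasDerivWithinAt (s := Set.Icc (0:ℝ) Th)
      have hcomb := (h21.mul (hX t ht)).add (h22.mul (hs t ht))
      convert hcomb using 1
      · exact rfl
      · exact rfl
      · exact rfl
      have e1 : A - lam1Inf A Q + G = G / 2 - aHat A Q G := by unfold lam1Inf aHat; ring
      have e2 : lam1Inf A Q * G = Q * Γ - qHat A Q G Γ := by unfold lam1Inf qHat; ring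
      have e3 : A - lam1Inf A Q = -(aHat A Q G + G / 2) := by unfold lam1Inf aHat; ring
      rw [e1, e2, e3]
      ring
    have hcont : ContinuousOn (fun u => phi21 A Q G Γ Th u * X u + phi22 A Q G Γ Th u * s u)
        (Set.Icc (0:ℝ) Th) := fun t ht => ((hF t ht).continuousWithinAt)
    have hderiv : ∀ t ∈ Set.Ioo (0:ℝ) Th,
        HasDerivWithinAt (fun u => phi21 A Q G Γ Th u * X u + phi22 A Q G Γ Th u * s u)
          (phi22 A Q G Γ Th t * (Q * η)) (Set.Ioi t) t := by
      intro t ht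
      exact (((hF t (Set.Ioo_subset_Icc_self ht)).hasDerivAt
        (Icc_mem_nhds ht.1 ht.2)).hasDerivWithinAt)
    have hint : IntervalIntegrable (fun τ => phi22 A Q G Γ Th τ * (Q * η))
        MeasureTheory.volume 0 Th :=
      ((phi22_continuous A Q G Γ Th).mul continuous_const).intervalIntegrable 0 Th
    have hftc := intervalIntegral.integral_eq_sub_of_hasDeriv_right_of_le hT0.le
      hcont hderiv hint
    simp only [h21T, h22T, h220, hX0, zero_mul, one_mul, add_zero, zero_add] at hftc
    linarith [hx0, hftc]
  refine ⟨part1, fun s0 => ?_⟩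
  obtain ⟨X, s, hX0, hs0, hODE⟩ := exists_sol (aHat A Q G) (Real.sqrt (deltaHat A Q G Γ)) G
    x0hat s0 (Q * η) hd.ne'
  have hsys : IsLinSysOn A Q G Γ η (tHat A Q G Γ) X s := by
    constructor
    · intro t ht
      have h := ((hODE t).1).hasDerivWithinAt (s := Set.Icc (0:ℝ) (tHat A Q G Γ))
      convert h using 1
      · exact rfl
      · exact rfl
      unfold lam1Inf aHat
      ring
    · intro t ht
      have h := ((hODE t).2).hasDerivWithinAt (s := Set.Icc (0:ℝ) (tHat A Q G Γ))
      convert h using 1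
      · exact rfl
      · exact rfl
      have key : (aHat A Q G) ^ 2 - (Real.sqrt (deltaHat A Q G Γ)) ^ 2 = qHat A Q G Γ := by
        linarith
      rw [key]
      unfold qHat lam1Inf aHat
      ring
  exact ⟨X, s, hsys, hX0, hs0, part1 X s hsys hX0⟩
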